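/- For every n ≥ 1, Reg_∞ annihilates the word consisting of n copies of the letter −1: Reg_∞((e_{−1})ⁿ) = 0. -/
import Mathlib


/-- The shuffle product on words, with values in the free ℚ-vector space on words. -/
noncomputable def shuffle {α : Type*} : List α → List α → (List α →₀ ℚ)
  | [], w => Finsupp.single w 1
  | a :: u, [] => Finsupp.single (a :: u) 1
  | a :: u, b :: v =>
      Finsupp.mapDomain (List.cons a) (shuffle u (b :: v)) +
      Finsupp.mapDomain (List.cons b) (shuffle (a :: u) v)

/-- Bilinear extension of the shuffle product to T(Σ). -/
noncomputable def shuffleExt {α : Type*} (x y : List α →₀ ℚ) : List α →₀ ℚ :=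
  x.sum fun u cu => y.sum fun v cv => (cu * cv) • shuffle u v

/-- The regularization map `Reg_∞`: on a word `w = σ₁…σₙ`,
`Reg_∞(w) = ∑_{k=1}^n (σₖ − e_m)[(−e_m)^{k−1} ⧢ σ_{k+1}…σₙ]`, where `m` plays the
role of the letter `−1` and `(−e_m)^{k−1}` is `(−1)^{k−1}` times the word of
`k−1` copies of `m`. -/
noncomputable def regInf {α : Type*} (m : α) (w : List α) : List α →₀ ℚ :=
  ∑ k ∈ Finset.range w.length,
    ((-1 : ℚ) ^ k) •
      (Finsupp.mapDomain (List.cons (w.getD k m))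
          (shuffle (List.replicate k m) (w.drop (k + 1))) -
       Finsupp.mapDomain (List.cons m)
          (shuffle (List.replicate k m) (w.drop (k + 1))))

/-- `Reg_∞` annihilates the word of `n ≥ 1` copies of the letter `−1` (here `m`). -/
theorem regInf_replicate_eq_zero {α : Type*} (m : α) (n : ℕ) (hn : 1 ≤ n) :
    regInf m (List.replicate n m) = 0 := by
  unfold regInf
  apply Finset.sum_eq_zero
  intro k hk
  have : (List.replicate n m).getD k m = m := by
    rcases lt_or_ge k n with h | h
    · simp [List.getD_eq_getElem?_getD, List.getElem?_replicate, h]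
    · have h2 : (List.replicate n m)[k]? = none := by
        rw [List.getElem?_eq_none_iff, List.length_replicate]; exact h
      simp [List.getD_eq_getElem?_getD, h2]
  rw [this]
  simp
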